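/- Let F be a finite field and let d be an integer with 2 ≤ d ≤ |F| + 1; if d = 2, assume further that |F| is not congruent to 3 modulo 4. Then there exists a subset C₀ ⊆ F^d with |C₀| = |F| + 1 − d such that every affine hyperplane of F^d contains at most d points of C₀ and every Q-quadric in F^d for Q = X₁² + ⋯ + X_d² contains at most d+1 points of C₀ (i.e. C₀ is Q-generic for Q = X₁² + ⋯ + X_d²). -/

import Mathlib

/-- A subset `D ⊆ F^d` is `Q`-generic over `F` if every affine hyperplane of `F^d`
contains at most `d` points of `D`, and every `Q`-quadric contains at most `d+1`
points of `D`. -/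
def QGeneric {F : Type*} [Field F] {d : ℕ} (Q : MvPolynomial (Fin d) F)
    (D : Set (Fin d → F)) : Prop :=
  (∀ f : MvPolynomial (Fin d) F, f.totalDegree = 1 →
    {x ∈ D | MvPolynomial.eval x f = 0}.encard ≤ (d : ℕ∞)) ∧
  (∀ f : MvPolynomial (Fin d) F, f.totalDegree ≤ 1 →
    {x ∈ D | MvPolynomial.eval x (Q + f) = 0}.encard ≤ (d : ℕ∞) + 1)


open Polynomial

namespace Stmt5

variable {F : Type*} [Field F]

lemma monom_classify {d : ℕ} (m : Fin d →₀ ℕ) (hm : (m.sum fun _ e => e) ≤ 1) :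
    m = 0 ∨ ∃ i, m = Finsupp.single i 1 := by
  rcases eq_or_ne m 0 with h | h
  · exact Or.inl h
  · right
    obtain ⟨i, hi⟩ : ∃ i, m i ≠ 0 := by
      by_contra hc
      push_neg at hc
      exact h (Finsupp.ext fun j => hc j)
    have hims : i ∈ m.support := Finsupp.mem_support_iff.mpr hi
    have hsum : (m.sum fun _ e => e) = ∑ j ∈ m.support, m j := rfl
    have h1 : m i ≤ ∑ j ∈ m.support, m j :=
      Finset.single_le_sum (fun j _ => Nat.zero_le _) hims
    have hmi : m i = 1 := by omega
    refine ⟨i, Finsupp.ext fun j => ?_⟩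
    rcases eq_or_ne j i with rfl | hj
    · simpa using hmi
    · rw [Finsupp.single_apply, if_neg (fun hh => hj hh.symm)]
      by_contra hj0
      have hjms : j ∈ m.support := Finsupp.mem_support_iff.mpr hj0
      have hsub : ({i, j} : Finset (Fin d)) ⊆ m.support := by
        intro x hx
        rcases Finset.mem_insert.mp hx with rfl | hx
        · exact hims
        · rwa [Finset.mem_singleton.mp hx]
      have hp : ∑ x ∈ ({i, j} : Finset (Fin d)), m x = m i + m j :=
        Finset.sum_pair (fun hh => hj hh.symm)
      have hq : ∑ x ∈ ({i, j} : Finset (Fin d)), m x ≤ ∑ x ∈ m.support, m x :=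
        Finset.sum_le_sum_of_subset hsub
      omega

lemma eval_le_one {d : ℕ} (f : MvPolynomial (Fin d) F) (hf : f.totalDegree ≤ 1) (x : Fin d → F) :
    MvPolynomial.eval x f =
      f.coeff 0 + ∑ i, f.coeff (Finsupp.single i 1) * x i := by
  classical
  have hsupp : f.support ⊆ insert 0 (Finset.univ.image fun i => Finsupp.single i 1) := by
    intro m hm
    rcases monom_classify m (le_trans (MvPolynomial.le_totalDegree hm) hf) with h | ⟨i, rfl⟩
    · simp [h]
    · exact Finset.mem_insert_of_mem (Finset.mem_image.mpr ⟨i, Finset.mem_univ _, rfl⟩)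
  rw [MvPolynomial.eval_eq]
  rw [Finset.sum_subset hsupp (by
    intro m _ hm
    simp [MvPolynomial.notMem_support_iff.mp hm])]
  rw [Finset.sum_insert (by simp [Finsupp.single_eq_zero, eq_comm])]
  congr 1
  · simp
  · rw [Finset.sum_image (fun i _ j _ h => Finsupp.single_left_injective one_ne_zero h)]
    refine Finset.sum_congr rfl fun i _ => ?_
    rw [Finsupp.support_single_ne_zero _ one_ne_zero]
    simp

lemma exists_linear_coeff {d : ℕ} (f : MvPolynomial (Fin d) F) (hf : f.totalDegree = 1) :
    ∃ i, f.coeff (Finsupp.single i 1) ≠ 0 := by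
  by_contra hc
  push_neg at hc
  have h0 : f.totalDegree ≤ 0 := by
    rw [MvPolynomial.totalDegree]
    apply Finset.sup_le
    intro m hm
    rcases monom_classify m (le_trans (MvPolynomial.le_totalDegree hm) hf.le) with h | ⟨i, rfl⟩
    · simp [h]
    · exact absurd (MvPolynomial.mem_support_iff.mp hm) (by simpa using hc i)
  omega

section Odd

variable {F : Type*} [Field F] (a b : F)

noncomputable def quad (s : (Polynomial F × Polynomial F) × (Polynomial F × Polynomial F)) :
    List (Polynomial F) :=
  [s.1.1 + s.1.2 - C a * s.2.1 - C a * s.2.2,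
   C a * s.1.1 + C a * s.1.2 + s.2.1 + s.2.2,
   C b * s.1.1 - C b * s.1.2,
   C b * s.2.1 - C b * s.2.2]

noncomputable def quadify
    (L : List ((Polynomial F × Polynomial F) × (Polynomial F × Polynomial F))) :
    List (Polynomial F) :=
  (L.map (quad a b)).flatten

@[simp] lemma quad_length (s : (Polynomial F × Polynomial F) × (Polynomial F × Polynomial F)) :
    (quad a b s).length = 4 := rfl

@[simp] lemma quadify_nil : quadify a b [] = [] := by simp [quadify]

@[simp] lemma quadify_cons (s : (Polynomial F × Polynomial F) × (Polynomial F × Polynomial F))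
    (rest : List ((Polynomial F × Polynomial F) × (Polynomial F × Polynomial F))) :
    quadify a b (s :: rest) = quad a b s ++ quadify a b rest := by
  simp [quadify]

lemma quadify_length (L : List ((Polynomial F × Polynomial F) × (Polynomial F × Polynomial F))) :
    (quadify a b L).length = 4 * L.length := by
  induction L with
  | nil => simp
  | cons s rest ih => simp [quad, ih]; ring

lemma hC_of (hab : 1 + a ^ 2 + b ^ 2 = 0) :
    (1 : Polynomial F) + C a ^ 2 + C b ^ 2 = 0 := by
  rw [← C_1, ← C_pow, ← C_pow, ← C_add, ← C_add, hab, C_0]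

lemma quad_sumsq (hab : 1 + a ^ 2 + b ^ 2 = 0)
    (s : (Polynomial F × Polynomial F) × (Polynomial F × Polynomial F)) :
    ((quad a b s).map (· ^ 2)).sum
      = -(4 * C b ^ 2) * (s.1.1 * s.1.2 + s.2.1 * s.2.2) := by
  have hC := hC_of a b hab
  simp only [quad, List.map_cons, List.map_nil, List.sum_cons, List.sum_nil, add_zero]
  linear_combination ((s.1.1 + s.1.2) ^ 2 + (s.2.1 + s.2.2) ^ 2) * hC

lemma quadify_sumsq (hab : 1 + a ^ 2 + b ^ 2 = 0) :
    ∀ L : List ((Polynomial F × Polynomial F) × (Polynomial F × Polynomial F)),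
    ((quadify a b L).map (· ^ 2)).sum
      = -(4 * C b ^ 2) * (L.map fun s => s.1.1 * s.1.2 + s.2.1 * s.2.2).sum
  | [] => by simp
  | s :: rest => by
    simp only [quadify_cons, List.map_append, List.sum_append, List.map_cons, List.sum_cons]
    rw [quad_sumsq a b hab s, quadify_sumsq hab rest]
    ring

lemma quad_span (hab : 1 + a ^ 2 + b ^ 2 = 0) (hb : b ≠ 0) (h2 : (2 : F) ≠ 0)
    (s : (Polynomial F × Polynomial F) × (Polynomial F × Polynomial F)) :
    Submodule.span F {r : Polynomial F | r ∈ quad a b s}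
      = Submodule.span F {s.1.1, s.1.2, s.2.1, s.2.2} := by
  obtain ⟨⟨f, g⟩, h, k⟩ := s
  have hC := hC_of a b hab
  have hba : (-(b ^ 2) : F) ≠ 0 := neg_ne_zero.mpr (pow_ne_zero 2 hb)
  simp only at *
  apply le_antisymm
  · rw [Submodule.span_le]
    intro r hr
    simp only [quad, List.mem_cons, List.mem_singleton, Set.mem_setOf_eq,
      List.not_mem_nil, or_false] at hr
    have hf : f ∈ Submodule.span F {f, g, h, k} := Submodule.subset_span (by simp)
    have hg : g ∈ Submodule.span F {f, g, h, k} := Submodule.subset_span (by simp)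
    have hh : h ∈ Submodule.span F {f, g, h, k} := Submodule.subset_span (by simp)
    have hk : k ∈ Submodule.span F {f, g, h, k} := Submodule.subset_span (by simp)
    have hsm : ∀ (c : F) (x : Polynomial F), x ∈ Submodule.span F {f, g, h, k} →
        C c * x ∈ Submodule.span F {f, g, h, k} := by
      intro c x hx
      rw [← Polynomial.smul_eq_C_mul]
      exact Submodule.smul_mem _ _ hx
    rcases hr with rfl | rfl | rfl | rfl
    · exact Submodule.sub_mem _ (Submodule.sub_mem _ (Submodule.add_mem _ hf hg)
        (hsm a h hh)) (hsm a k hk)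
    · exact Submodule.add_mem _ (Submodule.add_mem _ (Submodule.add_mem _
        (hsm a f hf) (hsm a g hg)) hh) hk
    · exact Submodule.sub_mem _ (hsm b f hf) (hsm b g hg)
    · exact Submodule.sub_mem _ (hsm b h hh) (hsm b k hk)
  · set p1 : Polynomial F := f + g - C a * h - C a * k with hp1
    set p2 : Polynomial F := C a * f + C a * g + h + k with hp2
    set p3 : Polynomial F := C b * f - C b * g with hp3
    set p4 : Polynomial F := C b * h - C b * k with hp4
    set T := Submodule.span F {r : Polynomial F | r ∈ quad a b ((f, g), (h, k))} with hT
    have m1 : p1 ∈ T := Submodule.subset_span (by simp [quad, hp1])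
    have m2 : p2 ∈ T := Submodule.subset_span (by simp [quad, hp2])
    have m3 : p3 ∈ T := Submodule.subset_span (by simp [quad, hp3])
    have m4 : p4 ∈ T := Submodule.subset_span (by simp [quad, hp4])
    have e1 : p1 + a • p2 = (-(b ^ 2) : F) • (f + g) := by
      simp only [Polynomial.smul_eq_C_mul, hp1, hp2, map_neg, map_pow]
      linear_combination (f + g) * hC
    have hfg : f + g ∈ T := by
      have : f + g = (-(b ^ 2) : F)⁻¹ • (p1 + a • p2) := by
        rw [e1, smul_smul, inv_mul_cancel₀ hba, one_smul]
      rw [this]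
      exact Submodule.smul_mem _ _ (Submodule.add_mem _ m1 (Submodule.smul_mem _ _ m2))
    have e2 : p3 = b • (f - g) := by
      simp only [Polynomial.smul_eq_C_mul, hp3]
      ring
    have hfg' : f - g ∈ T := by
      have : f - g = b⁻¹ • p3 := by
        rw [e2, smul_smul, inv_mul_cancel₀ hb, one_smul]
      rw [this]
      exact Submodule.smul_mem _ _ m3
    have e3 : p2 = a • (f + g) + (h + k) := by
      simp only [Polynomial.smul_eq_C_mul, hp2]
      ring
    have hhk : h + k ∈ T := by
      have : h + k = p2 - a • (f + g) := by rw [e3]; ring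
      rw [this]
      exact Submodule.sub_mem _ m2 (Submodule.smul_mem _ _ hfg)
    have e4 : p4 = b • (h - k) := by
      simp only [Polynomial.smul_eq_C_mul, hp4]
      ring
    have hhk' : h - k ∈ T := by
      have : h - k = b⁻¹ • p4 := by
        rw [e4, smul_smul, inv_mul_cancel₀ hb, one_smul]
      rw [this]
      exact Submodule.smul_mem _ _ m4
    have half : ∀ x y : Polynomial F, x + y ∈ T → x - y ∈ T → x ∈ T ∧ y ∈ T := by
      intro x y hxy hxy'
      constructor
      · have : x = (2 : F)⁻¹ • ((x + y) + (x - y)) := by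
          have h2s : (x + y) + (x - y) = (2 : F) • x := by rw [two_smul]; ring
          rw [h2s, smul_smul, inv_mul_cancel₀ h2, one_smul]
        rw [this]
        exact Submodule.smul_mem _ _ (Submodule.add_mem _ hxy hxy')
      · have : y = (2 : F)⁻¹ • ((x + y) - (x - y)) := by
          have h2s : (x + y) - (x - y) = (2 : F) • y := by rw [two_smul]; ring
          rw [h2s, smul_smul, inv_mul_cancel₀ h2, one_smul]
        rw [this]
        exact Submodule.smul_mem _ _ (Submodule.sub_mem _ hxy hxy')
    obtain ⟨hf, hg⟩ := half f g hfg hfg'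
    obtain ⟨hh, hk⟩ := half h k hhk hhk'
    rw [Submodule.span_le]
    intro r hr
    simp only [Set.mem_insert_iff, Set.mem_singleton_iff] at hr
    rcases hr with rfl | rfl | rfl | rfl
    · exact hf
    · exact hg
    · exact hh
    · exact hk

lemma quadify_deg {D : ℕ}
    (L : List ((Polynomial F × Polynomial F) × (Polynomial F × Polynomial F)))
    (hL : ∀ s ∈ L, s.1.1.natDegree ≤ D ∧ s.1.2.natDegree ≤ D ∧
      s.2.1.natDegree ≤ D ∧ s.2.2.natDegree ≤ D) :
    ∀ r ∈ quadify a b L, r.natDegree ≤ D := by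
  induction L with
  | nil => simp
  | cons s rest ih =>
    intro r hr
    rw [quadify_cons, List.mem_append] at hr
    rcases hr with hr | hr
    · obtain ⟨h11, h12, h21, h22⟩ := hL s List.mem_cons_self
      have hCa : ∀ (c : F) (x : Polynomial F), x.natDegree ≤ D →
          (C c * x).natDegree ≤ D := fun c x hx => le_trans (natDegree_C_mul_le _ _) hx
      simp only [quad, List.mem_cons, List.mem_singleton, List.not_mem_nil, or_false] at hr
      rcases hr with rfl | rfl | rfl | rfl
      · exact le_trans (natDegree_sub_le _ _) (max_le (le_trans (natDegree_sub_le _ _)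
          (max_le (le_trans (natDegree_add_le _ _) (max_le h11 h12)) (hCa a _ h21)))
          (hCa a _ h22))
      · exact le_trans (natDegree_add_le _ _) (max_le (le_trans (natDegree_add_le _ _)
          (max_le (le_trans (natDegree_add_le _ _) (max_le (hCa a _ h11) (hCa a _ h12)))
          h21)) h22)
      · exact le_trans (natDegree_sub_le _ _) (max_le (hCa b _ h11) (hCa b _ h12))
      · exact le_trans (natDegree_sub_le _ _) (max_le (hCa b _ h21) (hCa b _ h22))
    · exact ih (fun t ht => hL t (List.mem_cons_of_mem _ ht)) r hr

lemma quadify_comp_mem_span (hab : 1 + a ^ 2 + b ^ 2 = 0) (hb : b ≠ 0) (h2 : (2 : F) ≠ 0)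
    (L : List ((Polynomial F × Polynomial F) × (Polynomial F × Polynomial F)))
    {c : Polynomial F}
    (hc : ∃ s ∈ L, c = s.1.1 ∨ c = s.1.2 ∨ c = s.2.1 ∨ c = s.2.2) :
    c ∈ Submodule.span F {r : Polynomial F | r ∈ quadify a b L} := by
  induction L with
  | nil => simp at hc
  | cons s rest ih =>
    have hsplit : {r : Polynomial F | r ∈ quadify a b (s :: rest)}
        = {r : Polynomial F | r ∈ quad a b s} ∪ {r : Polynomial F | r ∈ quadify a b rest} := by
      ext r
      simp [List.mem_append]
    rw [hsplit, Submodule.span_union]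
    obtain ⟨t, ht, hct⟩ := hc
    rcases List.mem_cons.mp ht with rfl | ht'
    · refine Submodule.mem_sup_left ?_
      rw [quad_span a b hab hb h2]
      refine Submodule.subset_span ?_
      rcases hct with rfl | rfl | rfl | rfl <;> simp
    · exact Submodule.mem_sup_right (ih ⟨t, ht', hct⟩)

end Odd

end Stmt5

namespace Stmt5

lemma reduction (F : Type*) [Field F] [Fintype F] (d : ℕ) (hd : 2 ≤ d)
    (p : Fin d → Polynomial F)
    (hdeg : ∀ i, (p i).natDegree ≤ d)
    (hspan : ∀ k, k ≤ d → (X : Polynomial F) ^ k ∈ Submodule.span F (insert X (Set.range p)))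
    (hS : (∑ i, p i ^ 2).natDegree ≤ d + 1)
    (hS0 : (∑ i, p i ^ 2).coeff 0 ≠ 0) :
    ∃ C₀ : Set (Fin d → F), C₀.ncard = Fintype.card F + 1 - d ∧
      QGeneric (∑ i : Fin d, (MvPolynomial.X i : MvPolynomial (Fin d) F) ^ 2) C₀ := by
  classical
  set v : Fin (d + 1) → Polynomial F := Fin.cons X p with hv
  have hrange : Set.range v = insert X (Set.range p) := by
    rw [hv, Fin.range_cons]
  have hspan' : Submodule.span F (Set.range v) = Polynomial.degreeLT F (d + 1) := by
    apply le_antisymm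
    · rw [Submodule.span_le]
      rintro q ⟨i, rfl⟩
      rw [SetLike.mem_coe, Polynomial.mem_degreeLT]
      have hq : (v i).natDegree ≤ d := by
        refine Fin.cases ?_ ?_ i
        · simp only [hv, Fin.cons_zero]
          exact le_trans natDegree_X_le (by omega)
        · intro j; simpa [hv] using hdeg j
      calc (v i).degree ≤ ((v i).natDegree : WithBot ℕ) := degree_le_natDegree
        _ < ((d + 1 : ℕ) : WithBot ℕ) := by
            exact_mod_cast Nat.lt_succ_of_le hq
    · intro q hq
      rw [Polynomial.mem_degreeLT] at hq
      have hnd : q.natDegree < d + 1 := by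
        rcases eq_or_ne q 0 with rfl | h0
        · simp
        · exact (natDegree_lt_iff_degree_lt h0).mpr (by exact_mod_cast hq)
      rw [q.as_sum_range' (d + 1) hnd]
      refine Submodule.sum_mem _ fun k hk => ?_
      rw [← Polynomial.smul_X_eq_monomial]
      refine Submodule.smul_mem _ _ ?_
      rw [hrange]
      exact hspan k (Nat.lt_succ_iff.mp (Finset.mem_range.mp hk))
  have hfr : Module.finrank F (Polynomial.degreeLT F (d + 1)) = d + 1 := by
    rw [(Polynomial.degreeLTEquiv F (d + 1)).finrank_eq, Module.finrank_fin_fun]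
  have hli : LinearIndependent F v := by
    rw [linearIndependent_iff_card_eq_finrank_span]
    simp only [Set.finrank]
    rw [hspan', hfr, Fintype.card_fin]
  have hcombo : ∀ (c0 : F) (c : Fin d → F),
      (C c0 * X + ∑ i, C (c i) * p i = 0) → c0 = 0 ∧ ∀ j, c j = 0 := by
    intro c0 c hcc
    have hsum : ∑ i, (Fin.cons c0 c : Fin (d + 1) → F) i • v i
        = C c0 * X + ∑ i, C (c i) * p i := by
      rw [Fin.sum_univ_succ]
      simp [hv, Polynomial.smul_eq_C_mul]
    have h0 := Fintype.linearIndependent_iff.mp hli ((Fin.cons c0 c : Fin (d + 1) → F))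
      (by rw [hsum, hcc])
    refine ⟨by simpa using h0 0, fun j => by simpa using h0 j.succ⟩
  obtain ⟨W, hWsub, hWcard⟩ :=
    Finset.exists_subset_card_eq (s := Finset.univ.erase (0 : F))
      (n := Fintype.card F + 1 - d) (by
        rw [Finset.card_erase_of_mem (Finset.mem_univ _), Finset.card_univ]
        have : 1 ≤ Fintype.card F := Fintype.card_pos
        omega)
  have hW0 : ∀ t ∈ W, t ≠ (0 : F) := fun t ht => (Finset.mem_erase.mp (hWsub ht)).1
  set φ : F → Fin d → F := fun t i => (p i).eval t / t with hφ
  obtain ⟨α, z, hz, h1⟩ := Submodule.mem_span_insert.mp (by simpa using hspan 0 (Nat.zero_le d))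
  obtain ⟨γ, hγ⟩ := (Submodule.mem_span_range_iff_exists_fun F).mp hz
  have hkey1 : ∀ t : F, t ≠ 0 → ∑ i, γ i * φ t i = 1 / t - α := by
    intro t ht
    have heq : (1 : Polynomial F).eval t = (α • (X : Polynomial F) + ∑ i, γ i • p i).eval t := by
      rw [hγ, ← h1]
    simp only [eval_one, eval_add, eval_smul, eval_X, smul_eq_mul,
      Polynomial.eval_finset_sum] at heq
    have hsum : ∑ i, γ i * (p i).eval t = 1 - α * t := by
      rw [eq_sub_iff_add_eq]
      linear_combination (-1 : F) * heq
    calc ∑ i, γ i * φ t i = (∑ i, γ i * (p i).eval t) / t := by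
          rw [Finset.sum_div]
          refine Finset.sum_congr rfl fun i _ => ?_
          simp only [hφ]
          exact (mul_div_assoc _ _ _).symm
      _ = (1 - α * t) / t := by rw [hsum]
      _ = 1 / t - α := by field_simp
  have hinj : Set.InjOn φ ↑W := by
    intro s hs t ht hst
    have h1' := hkey1 s (hW0 s hs)
    rw [hst] at h1'
    have h2' := hkey1 t (hW0 t ht)
    have hioio : (1 : F) / s = 1 / t := by
      have := h1'.symm.trans h2'
      linear_combination this
    rw [one_div, one_div] at hioio
    exact inv_injective hioio
  have key : ∀ N : Polynomial F, N ≠ 0 → ∀ g : (Fin d → F) → Prop,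
      (∀ t ∈ W, g (φ t) → N.eval t = 0) →
      {x ∈ φ '' ↑W | g x}.encard ≤ (N.natDegree : ℕ∞) := by
    intro N hN g hg
    have hsub : {x ∈ φ '' ↑W | g x} ⊆ φ '' {t : F | t ∈ W ∧ N.eval t = 0} := by
      rintro x ⟨⟨t, htW, rfl⟩, hgx⟩
      exact ⟨t, ⟨htW, hg t htW hgx⟩, rfl⟩
    have hsub2 : {t : F | t ∈ W ∧ N.eval t = 0} ⊆ ↑N.roots.toFinset := by
      rintro t ⟨-, ht⟩
      simp only [Finset.coe_sort_coe, Multiset.mem_toFinset, Set.mem_setOf_eq,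
        Finset.mem_coe]
      rw [Polynomial.mem_roots hN]
      exact ht
    calc {x ∈ φ '' ↑W | g x}.encard ≤ (φ '' {t : F | t ∈ W ∧ N.eval t = 0}).encard :=
          Set.encard_le_encard hsub
      _ ≤ {t : F | t ∈ W ∧ N.eval t = 0}.encard := Set.encard_image_le _ _
      _ ≤ (↑N.roots.toFinset : Set F).encard := Set.encard_le_encard hsub2
      _ = (N.roots.toFinset.card : ℕ∞) := Set.encard_coe_eq_coe_finsetCard _
      _ ≤ (N.natDegree : ℕ∞) := by
          exact_mod_cast Nat.cast_le.mpr
            (le_trans (Multiset.toFinset_card_le _) (Polynomial.card_roots' N))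
  refine ⟨φ '' ↑W, ?_, ?_, ?_⟩
  · rw [Set.ncard_image_of_injOn hinj, Set.ncard_coe_finset, hWcard]
  · -- hyperplanes
    intro f hf
    set c0 := f.coeff 0 with hc0
    set c : Fin d → F := fun i => f.coeff (Finsupp.single i 1) with hc
    obtain ⟨i0, hi0⟩ := exists_linear_coeff f hf
    set N : Polynomial F := C c0 * X + ∑ i, C (c i) * p i with hN
    have hNne : N ≠ 0 := by
      intro h
      exact hi0 ((hcombo c0 c h).2 i0)
    have hNdeg : N.natDegree ≤ d := by
      refine le_trans (natDegree_add_le _ _) (max_le ?_ ?_)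
      · exact le_trans (natDegree_C_mul_le _ _) (le_trans natDegree_X_le (by omega))
      · exact Polynomial.natDegree_sum_le_of_forall_le _ _ fun i _ =>
          le_trans (natDegree_C_mul_le _ _) (hdeg i)
    have hb := key N hNne (fun x => MvPolynomial.eval x f = 0) ?_
    · exact le_trans hb (by exact_mod_cast Nat.cast_le.mpr hNdeg)
    · intro t htW hgt
      have ht0 := hW0 t htW
      rw [eval_le_one f hf.le] at hgt
      have hterm : ∀ i : Fin d, c i * φ t i * t = c i * (p i).eval t := by
        intro i
        rw [hφ]
        field_simp
      calc N.eval t = c0 * t + ∑ i, c i * (p i).eval t := by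
            simp [hN, Polynomial.eval_finset_sum]
        _ = c0 * t + ∑ i, c i * φ t i * t := by
            rw [Finset.sum_congr rfl fun i _ => (hterm i).symm]
        _ = (c0 + ∑ i, c i * φ t i) * t := by rw [add_mul, Finset.sum_mul]
        _ = 0 := by rw [hgt, zero_mul]
  · -- quadrics
    intro f hf
    set c0 := f.coeff 0 with hc0
    set c : Fin d → F := fun i => f.coeff (Finsupp.single i 1) with hc
    set M : Polynomial F := (∑ i, p i ^ 2) + C c0 * X ^ 2 + X * ∑ i, C (c i) * p i with hM
    have hM0 : M.coeff 0 = (∑ i, p i ^ 2).coeff 0 := by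
      simp [hM, Polynomial.coeff_add, Polynomial.mul_coeff_zero, Polynomial.coeff_X_zero,
        coeff_X_pow]
    have hMne : M ≠ 0 := by
      intro h
      rw [h] at hM0
      exact hS0 (by simpa using hM0.symm)
    have hMdeg : M.natDegree ≤ d + 1 := by
      refine le_trans (natDegree_add_le _ _) (max_le (le_trans (natDegree_add_le _ _)
        (max_le hS ?_)) ?_)
      · exact le_trans (natDegree_C_mul_le _ _) (by simp; omega)
      · refine le_trans (natDegree_mul_le) ?_
        have h2 : (∑ i, C (c i) * p i).natDegree ≤ d :=
          Polynomial.natDegree_sum_le_of_forall_le _ _ fun i _ =>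
            le_trans (natDegree_C_mul_le _ _) (hdeg i)
        have h3 := natDegree_X_le (R := F)
        omega
    have hb := key M hMne
      (fun x => MvPolynomial.eval x ((∑ i : Fin d, (MvPolynomial.X i : MvPolynomial (Fin d) F) ^ 2) + f) = 0) ?_
    · refine le_trans hb ?_
      have : ((M.natDegree : ℕ) : ℕ∞) ≤ ((d + 1 : ℕ) : ℕ∞) := Nat.cast_le.mpr hMdeg
      refine le_trans this ?_
      push_cast
      exact le_refl _
    · intro t htW hgt
      have ht0 := hW0 t htW
      have hQf : MvPolynomial.eval (φ t) ((∑ i : Fin d, (MvPolynomial.X i : MvPolynomial (Fin d) F) ^ 2) + f)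
          = (∑ i, (φ t i) ^ 2) + (c0 + ∑ i, c i * φ t i) := by
        rw [map_add]
        congr 1
        · rw [map_sum]
          exact Finset.sum_congr rfl fun i _ => by simp
        · exact eval_le_one f hf (φ t)
      rw [hQf] at hgt
      have hterm1 : ∀ i : Fin d, (φ t i) ^ 2 * t ^ 2 = ((p i).eval t) ^ 2 := by
        intro i
        rw [hφ]
        field_simp
      have hterm2 : ∀ i : Fin d, c i * φ t i * t ^ 2 = c i * (p i).eval t * t := by
        intro i
        rw [hφ]
        field_simp
      have hA : ∑ i, (φ t i) ^ 2 * t ^ 2 = ∑ i, ((p i).eval t) ^ 2 :=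
        Finset.sum_congr rfl fun i _ => hterm1 i
      have hB : ∑ i, c i * φ t i * t ^ 2 = ∑ i, c i * (p i).eval t * t :=
        Finset.sum_congr rfl fun i _ => hterm2 i
      have hC : ∑ i, c i * (p i).eval t * t = t * ∑ i, c i * (p i).eval t := by
        rw [Finset.mul_sum]
        exact Finset.sum_congr rfl fun i _ => by ring
      calc M.eval t = (∑ i, ((p i).eval t) ^ 2) + c0 * t ^ 2 + t * ∑ i, c i * (p i).eval t := by
            simp [hM, Polynomial.eval_finset_sum]
        _ = ((∑ i, (φ t i) ^ 2) + (c0 + ∑ i, c i * φ t i)) * t ^ 2 := by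
            rw [add_mul, add_mul, Finset.sum_mul, Finset.sum_mul, hA, hB, hC]
            ring
        _ = 0 := by rw [hgt, zero_mul]

lemma reduction_list (F : Type*) [Field F] [Fintype F] (d : ℕ) (hd : 2 ≤ d)
    (l : List (Polynomial F)) (hlen : l.length = d)
    (hdeg : ∀ r ∈ l, r.natDegree ≤ d)
    (hspan : ∀ k, k ≤ d → (X : Polynomial F) ^ k ∈ Submodule.span F (insert X {r | r ∈ l}))
    (hS : (l.map (· ^ 2)).sum.natDegree ≤ d + 1)
    (hS0 : (l.map (· ^ 2)).sum.coeff 0 ≠ 0) :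
    ∃ C₀ : Set (Fin d → F), C₀.ncard = Fintype.card F + 1 - d ∧
      QGeneric (∑ i : Fin d, (MvPolynomial.X i : MvPolynomial (Fin d) F) ^ 2) C₀ := by
  subst hlen
  set p : Fin l.length → Polynomial F := l.get with hp
  have hrange : insert (X : Polynomial F) (Set.range p) = insert X {r | r ∈ l} := by
    congr 1
    ext r
    constructor
    · rintro ⟨i, rfl⟩
      exact l.get_mem i
    · intro hr
      obtain ⟨i, hi⟩ := List.mem_iff_get.mp hr
      exact ⟨i, hi⟩
  have hsum : ∑ i, p i ^ 2 = (l.map (· ^ 2)).sum := by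
    conv_rhs => rw [← List.ofFn_get l]
    rw [List.map_ofFn, List.sum_ofFn]
    rfl
  refine reduction F l.length hd p (fun i => hdeg _ (l.get_mem i)) ?_ ?_ ?_
  · intro k hk
    rw [hrange]
    exact hspan k hk
  · rw [hsum]; exact hS
  · rw [hsum]; exact hS0

lemma char2_list (F : Type*) [Field F] (hchar : ringChar F = 2)
    (d : ℕ) (hd : 2 ≤ d) :
    ∃ l : List (Polynomial F), l.length = d ∧ (∀ r ∈ l, r.natDegree ≤ d) ∧
      (∀ k, k ≤ d → (X : Polynomial F) ^ k ∈ Submodule.span F (insert X {r | r ∈ l})) ∧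
      (l.map (· ^ 2)).sum.natDegree ≤ d + 1 ∧ (l.map (· ^ 2)).sum.coeff 0 ≠ 0 := by
  haveI : CharP F 2 := hchar ▸ ringChar.charP F
  set g : ℕ → Polynomial F := fun k => if k = 0 then X ^ d + 1 else X ^ k with hg
  set l : List (Polynomial F) := List.ofFn (fun i : Fin d => g (i + 1) - g i) with hl
  have hlen : l.length = d := by simp [hl]
  have hd0 : d ≠ 0 := by omega
  have hsum : l.sum = -1 := by
    rw [hl, List.sum_ofFn, Fin.sum_univ_eq_sum_range (fun i => g (i + 1) - g i) d,
      Finset.sum_range_sub g]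
    simp only [hg, if_neg hd0, if_pos rfl]
    ring
  have hS : (l.map (· ^ 2)).sum = 1 := by
    rw [← CharTwo.list_sum_sq, hsum]
    ring
  have hgb : ∀ k, k ≤ d → (g k).natDegree ≤ d := by
    intro k hk
    rcases eq_or_ne k 0 with rfl | hk0
    · simp only [hg, if_pos rfl]
      refine le_trans (natDegree_add_le _ _) ?_
      simp
    · simp only [hg, if_neg hk0, natDegree_X_pow]
      exact hk
  have hmem : ∀ n : ℕ, n < d → g (n + 1) - g n ∈ {r : Polynomial F | r ∈ l} := by
    intro n hn
    rw [hl]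
    simp only [Set.mem_setOf_eq, List.mem_ofFn]
    exact ⟨⟨n, hn⟩, rfl⟩
  have hmain : ∀ k, 1 ≤ k → k ≤ d →
      (X : Polynomial F) ^ k ∈ Submodule.span F (insert X {r | r ∈ l}) := by
    intro k
    induction k with
    | zero => omega
    | succ n ih =>
      intro hk1 hkd
      rcases Nat.lt_or_ge n 1 with h1 | h1
      · have : n = 0 := by omega
        subst this
        simpa [pow_one] using Submodule.subset_span (R := F)
          (Set.mem_insert (X : Polynomial F) {r | r ∈ l})
      · have hnd : n ≤ d := by omega
        have hn0 : n ≠ 0 := by omega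
        have hgn : g (n + 1) - g n = X ^ (n + 1) - X ^ n := by
          simp [hg, hn0]
        have hmem2 := Submodule.subset_span (R := F) (Set.mem_insert_of_mem (X : Polynomial F)
          (hmem n (by omega)))
        have hadd := Submodule.add_mem _ hmem2 (ih h1 hnd)
        rwa [hgn, sub_add_cancel] at hadd
  refine ⟨l, hlen, ?_, ?_, ?_, ?_⟩
  · intro r hr
    rw [hl, List.mem_ofFn] at hr
    obtain ⟨i, rfl⟩ := hr
    refine le_trans (natDegree_sub_le _ _) (max_le (hgb _ ?_) (hgb _ ?_)) <;> omega
  · intro k hkd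
    rcases Nat.eq_zero_or_pos k with rfl | hk
    · have h01 : g 1 - g 0 = X - (X ^ d + 1) := by simp [hg]
      have hX : (X : Polynomial F) ∈ Submodule.span F (insert X {r | r ∈ l}) :=
        Submodule.subset_span (R := F) (Set.mem_insert _ _)
      have hXd := hmain d (by omega) le_rfl
      have hel := Submodule.subset_span (R := F) (Set.mem_insert_of_mem (X : Polynomial F)
        (hmem 0 (by omega)))
      rw [h01] at hel
      have hrw : (X : Polynomial F) ^ 0 = X - X ^ d - (X - (X ^ d + 1)) := by ring
      rw [hrw]
      exact Submodule.sub_mem _ (Submodule.sub_mem _ hX hXd) hel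
    · exact hmain k hk hkd
  · rw [hS]
    simp
  · rw [hS]
    simp


section OddMain

variable {F : Type*} [Field F]

abbrev GoodList (F : Type*) [Field F] (d : ℕ) : Prop :=
  ∃ l : List (Polynomial F), l.length = d ∧ (∀ r ∈ l, r.natDegree ≤ d) ∧
    (∀ k, k ≤ d → (X : Polynomial F) ^ k ∈ Submodule.span F (insert X {r | r ∈ l})) ∧
    (l.map (· ^ 2)).sum.natDegree ≤ d + 1 ∧ (l.map (· ^ 2)).sum.coeff 0 ≠ 0

lemma mem_insert_span {l : List (Polynomial F)} {r : Polynomial F} (hr : r ∈ l) :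
    r ∈ Submodule.span F (insert (X : Polynomial F) {r | r ∈ l}) :=
  Submodule.subset_span (R := F) (Set.mem_insert_of_mem _ hr)

lemma X_mem_insert_span (l : List (Polynomial F)) :
    (X : Polynomial F) ∈ Submodule.span F (insert (X : Polynomial F) {r | r ∈ l}) :=
  Submodule.subset_span (R := F) (Set.mem_insert _ _)

lemma deg_CXpow (c : F) (n D : ℕ) (h : n ≤ D) : (C c * X ^ n).natDegree ≤ D :=
  le_trans (natDegree_C_mul_le _ _) (by simpa [natDegree_X_pow] using h)

lemma coeff0_CXpow (c : F) (n : ℕ) (h : n ≠ 0) : (C c * X ^ n).coeff 0 = 0 := by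
  rw [Polynomial.mul_coeff_zero, coeff_X_pow]
  simp [Ne.symm h]

lemma good2 (i : F) (hi : 1 + i ^ 2 = 0) : GoodList F 2 := by
  have hCi : (1 : Polynomial F) + C i ^ 2 = 0 := by
    rw [← C_1, ← C_pow, ← C_add, hi, C_0]
  set q1 : Polynomial F := X ^ 2 with hq1
  set q2 : Polynomial F := C i * X ^ 2 + 1 with hq2
  set l : List (Polynomial F) := [q1, q2] with hl
  have m1 : q1 ∈ Submodule.span F (insert (X : Polynomial F) {r | r ∈ l}) :=
    mem_insert_span (by simp [hl])
  have m2 : q2 ∈ Submodule.span F (insert (X : Polynomial F) {r | r ∈ l}) :=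
    mem_insert_span (by simp [hl])
  have hsum : ((l.map (· ^ 2)).sum : Polynomial F) = C (2 * i) * X ^ 2 + 1 := by
    simp only [hl, hq1, hq2, List.map_cons, List.map_nil, List.sum_cons, List.sum_nil,
      add_zero, map_mul, map_ofNat]
    linear_combination (X : Polynomial F) ^ 4 * hCi
  refine ⟨l, rfl, ?_, ?_, ?_, ?_⟩
  · intro r hr
    simp only [hl, List.mem_cons, List.not_mem_nil, or_false, List.mem_singleton] at hr
    rcases hr with rfl | rfl
    · simp [hq1]
    · exact le_trans (natDegree_add_le _ _) (max_le (deg_CXpow i 2 2 le_rfl) (by simp))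
  · intro k hk
    have hk' : k = 0 ∨ k = 1 ∨ k = 2 := by omega
    rcases hk' with rfl | rfl | rfl
    · have hrw : (X : Polynomial F) ^ 0 = q2 - i • q1 := by
        rw [Polynomial.smul_eq_C_mul, hq1, hq2]
        ring
      rw [hrw]
      exact Submodule.sub_mem _ m2 (Submodule.smul_mem _ _ m1)
    · simpa [pow_one] using X_mem_insert_span _
    · exact m1
  · rw [hsum]
    exact le_trans (natDegree_add_le _ _) (max_le (deg_CXpow _ 2 3 (by omega)) (by simp))
  · rw [hsum, coeff_add, coeff0_CXpow _ 2 (by omega)]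
    simp

lemma good3 (a b : F) (hab : 1 + a ^ 2 + b ^ 2 = 0) (hb : b ≠ 0) : GoodList F 3 := by
  have hC := hC_of a b hab
  have hba : C b * C (a / b) = C a := by
    rw [← C_mul, mul_div_cancel₀ a hb]
  set q1 : Polynomial F := X ^ 3 with hq1
  set q2 : Polynomial F := C a * X ^ 3 + X ^ 2 with hq2
  set q3 : Polynomial F := C b * X ^ 3 + 1 - C (a / b) * X ^ 2 with hq3
  set l : List (Polynomial F) := [q1, q2, q3] with hl
  have m1 : q1 ∈ Submodule.span F (insert (X : Polynomial F) {r | r ∈ l}) :=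
    mem_insert_span (by simp [hl])
  have m2 : q2 ∈ Submodule.span F (insert (X : Polynomial F) {r | r ∈ l}) :=
    mem_insert_span (by simp [hl])
  have m3 : q3 ∈ Submodule.span F (insert (X : Polynomial F) {r | r ∈ l}) :=
    mem_insert_span (by simp [hl])
  have hX2 : (X : Polynomial F) ^ 2 ∈ Submodule.span F (insert (X : Polynomial F) {r | r ∈ l}) := by
    have hrw : (X : Polynomial F) ^ 2 = q2 - a • q1 := by
      rw [Polynomial.smul_eq_C_mul, hq2, hq1]
      ring
    rw [hrw]
    exact Submodule.sub_mem _ m2 (Submodule.smul_mem _ _ m1)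
  refine ⟨l, rfl, ?_, ?_, ?_, ?_⟩
  · intro r hr
    simp only [hl, List.mem_cons, List.not_mem_nil, or_false, List.mem_singleton] at hr
    rcases hr with rfl | rfl | rfl
    · simp [hq1]
    · exact le_trans (natDegree_add_le _ _) (max_le (deg_CXpow _ 3 3 le_rfl) (by simp))
    · refine le_trans (natDegree_sub_le _ _) (max_le (le_trans (natDegree_add_le _ _)
        (max_le (deg_CXpow _ 3 3 le_rfl) (by simp))) (deg_CXpow _ 2 3 (by omega)))
  · intro k hk
    have hk' : k = 0 ∨ k = 1 ∨ k = 2 ∨ k = 3 := by omega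
    rcases hk' with rfl | rfl | rfl | rfl
    · have hrw : (X : Polynomial F) ^ 0 = q3 - b • q1 + (a / b) • (X ^ 2) := by
        rw [Polynomial.smul_eq_C_mul, Polynomial.smul_eq_C_mul, hq3, hq1]
        ring
      rw [hrw]
      exact Submodule.add_mem _ (Submodule.sub_mem _ m3 (Submodule.smul_mem _ _ m1))
        (Submodule.smul_mem _ _ hX2)
    · simpa [pow_one] using X_mem_insert_span _
    · exact hX2
    · exact m1
  · have hsum : ((l.map (· ^ 2)).sum : Polynomial F)
        = C (a / b) ^ 2 * X ^ 4 + X ^ 4 + C (2 * b) * X ^ 3 - C (2 * (a / b)) * X ^ 2 + 1 := by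
      simp only [hl, hq1, hq2, hq3, List.map_cons, List.map_nil, List.sum_cons, List.sum_nil,
        add_zero, map_mul, map_ofNat]
      linear_combination (X : Polynomial F) ^ 6 * hC - 2 * (X : Polynomial F) ^ 5 * hba
    rw [hsum]
    refine le_trans (natDegree_add_le _ _) (max_le (le_trans (natDegree_sub_le _ _)
      (max_le (le_trans (natDegree_add_le _ _) (max_le (le_trans (natDegree_add_le _ _)
        (max_le ?_ (by simp))) (deg_CXpow _ 3 4 (by omega)))) (deg_CXpow _ 2 4 (by omega))))
      (by simp))
    exact le_trans natDegree_mul_le (by simp [natDegree_X_pow])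
  · have hsum : ((l.map (· ^ 2)).sum : Polynomial F)
        = C (a / b) ^ 2 * X ^ 4 + X ^ 4 + C (2 * b) * X ^ 3 - C (2 * (a / b)) * X ^ 2 + 1 := by
      simp only [hl, hq1, hq2, hq3, List.map_cons, List.map_nil, List.sum_cons, List.sum_nil,
        add_zero, map_mul, map_ofNat]
      linear_combination (X : Polynomial F) ^ 6 * hC - 2 * (X : Polynomial F) ^ 5 * hba
    rw [hsum]
    rw [coeff_add, coeff_sub, coeff_add, coeff_add, coeff0_CXpow _ 3 (by omega),
      coeff0_CXpow _ 2 (by omega)]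
    simp [coeff_X_pow, Polynomial.mul_coeff_zero]

lemma comp_mem_big (a b : F) (hab : 1 + a ^ 2 + b ^ 2 = 0) (hb : b ≠ 0) (h2 : (2 : F) ≠ 0)
    (L : List ((Polynomial F × Polynomial F) × (Polynomial F × Polynomial F)))
    (l : List (Polynomial F)) (hsub : ∀ r ∈ quadify a b L, r ∈ l) {c : Polynomial F}
    (hc : ∃ s ∈ L, c = s.1.1 ∨ c = s.1.2 ∨ c = s.2.1 ∨ c = s.2.2) :
    c ∈ Submodule.span F (insert (X : Polynomial F) {r | r ∈ l}) := by
  have h1 := quadify_comp_mem_span a b hab hb h2 L hc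
  exact Submodule.span_mono (fun r hr => Set.mem_insert_of_mem _ (hsub r hr)) h1

lemma good4 (a b : F) (hab : 1 + a ^ 2 + b ^ 2 = 0) (hb : b ≠ 0) (h2 : (2 : F) ≠ 0) :
    GoodList F 4 := by
  have h4F : (4 : F) ≠ 0 := by
    have h := mul_ne_zero h2 h2
    rwa [show (2 : F) * 2 = 4 by norm_num] at h
  set s1 : (Polynomial F × Polynomial F) × (Polynomial F × Polynomial F) :=
    ((X ^ 4 + 1, 1), (X ^ 3, X ^ 2)) with hs1
  set l : List (Polynomial F) := quadify a b [s1] with hl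
  have hlen : l.length = 4 := by simp [hl, quadify_length]
  have hcomp : ∀ c : Polynomial F, (c = X ^ 4 + 1 ∨ c = 1 ∨ c = X ^ 3 ∨ c = X ^ 2) →
      c ∈ Submodule.span F (insert (X : Polynomial F) {r | r ∈ l}) := by
    intro c hc
    exact comp_mem_big a b hab hb h2 [s1] l (by simp [hl]) ⟨s1, by simp, by simpa [hs1] using hc⟩
  have hsum : ((l.map (· ^ 2)).sum : Polynomial F)
      = C (-(4 * b ^ 2)) * (X ^ 5 + X ^ 4 + 1) := by
    rw [hl, quadify_sumsq a b hab]
    simp only [hs1, List.map_cons, List.map_nil, List.sum_cons, List.sum_nil, add_zero,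
      map_neg, map_mul, map_ofNat, map_pow]
    ring
  refine ⟨l, hlen, ?_, ?_, ?_, ?_⟩
  · intro r hr
    refine quadify_deg a b [s1] ?_ r (by rwa [hl] at hr)
    intro s hs
    simp only [List.mem_singleton] at hs
    subst hs
    refine ⟨?_, ?_, ?_, ?_⟩
    · exact le_trans (natDegree_add_le _ _) (by simp)
    · simp [hs1]
    · simp [hs1]
    · simp [hs1]
  · intro k hk
    have hk' : k = 0 ∨ k = 1 ∨ k = 2 ∨ k = 3 ∨ k = 4 := by omega
    rcases hk' with rfl | rfl | rfl | rfl | rfl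
    · simpa [pow_zero] using hcomp 1 (by simp)
    · simpa [pow_one] using X_mem_insert_span _
    · exact hcomp _ (by simp)
    · exact hcomp _ (by simp)
    · have hrw : (X : Polynomial F) ^ 4 = (X ^ 4 + 1) - 1 := by ring
      rw [hrw]
      exact Submodule.sub_mem _ (hcomp _ (by simp)) (hcomp 1 (by simp))
  · rw [hsum]
    refine le_trans natDegree_mul_le ?_
    have h1 : (C (-(4 * b ^ 2)) : Polynomial F).natDegree = 0 := natDegree_C _
    have h5 : ((X : Polynomial F) ^ 5 + X ^ 4 + 1).natDegree ≤ 5 :=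
      le_trans (natDegree_add_le _ _) (max_le (le_trans (natDegree_add_le _ _)
        (max_le (by simp) (by simp))) (by simp))
    omega
  · rw [hsum, Polynomial.mul_coeff_zero, coeff_C_zero]
    have : ((X : Polynomial F) ^ 5 + X ^ 4 + 1).coeff 0 = 1 := by
      rw [coeff_add, coeff_add, coeff_X_pow, coeff_X_pow]
      simp
    rw [this, mul_one]
    exact neg_ne_zero.mpr (mul_ne_zero h4F (pow_ne_zero 2 hb))

lemma good5 (a b : F) (hab : 1 + a ^ 2 + b ^ 2 = 0) (hb : b ≠ 0) (h2 : (2 : F) ≠ 0) :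
    GoodList F 5 := by
  have h4F : (4 : F) ≠ 0 := by
    have h := mul_ne_zero h2 h2
    rwa [show (2 : F) * 2 = 4 by norm_num] at h
  set s1 : (Polynomial F × Polynomial F) × (Polynomial F × Polynomial F) :=
    ((X ^ 5 + 1, 1), (X ^ 4, X ^ 2)) with hs1
  set l : List (Polynomial F) := quadify a b [s1] ++ [X ^ 3] with hl
  have hlen : l.length = 5 := by simp [hl, quadify_length]
  have hcomp : ∀ c : Polynomial F, (c = X ^ 5 + 1 ∨ c = 1 ∨ c = X ^ 4 ∨ c = X ^ 2) →
      c ∈ Submodule.span F (insert (X : Polynomial F) {r | r ∈ l}) := by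
    intro c hc
    refine comp_mem_big a b hab hb h2 [s1] l ?_ ⟨s1, by simp, by simpa [hs1] using hc⟩
    intro r hr
    rw [hl, List.mem_append]
    exact Or.inl hr
  have hX3 : (X : Polynomial F) ^ 3 ∈ Submodule.span F (insert (X : Polynomial F) {r | r ∈ l}) := by
    refine mem_insert_span ?_
    rw [hl, List.mem_append]
    exact Or.inr (by simp)
  have hsum : ((l.map (· ^ 2)).sum : Polynomial F)
      = C (-(4 * b ^ 2)) * (X ^ 6 + X ^ 5 + 1) + X ^ 6 := by
    rw [hl, List.map_append, List.sum_append, quadify_sumsq a b hab]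
    simp only [hs1, List.map_cons, List.map_nil, List.sum_cons, List.sum_nil, add_zero,
      map_neg, map_mul, map_ofNat, map_pow]
    ring
  refine ⟨l, hlen, ?_, ?_, ?_, ?_⟩
  · intro r hr
    rw [hl, List.mem_append] at hr
    rcases hr with hr | hr
    · refine quadify_deg a b [s1] ?_ r hr
      intro s hs
      simp only [List.mem_singleton] at hs
      subst hs
      refine ⟨?_, ?_, ?_, ?_⟩
      · exact le_trans (natDegree_add_le _ _) (by simp)
      · simp [hs1]
      · simp [hs1]
      · simp [hs1]
    · simp only [List.mem_singleton] at hr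
      subst hr
      simp
  · intro k hk
    have hk' : k = 0 ∨ k = 1 ∨ k = 2 ∨ k = 3 ∨ k = 4 ∨ k = 5 := by omega
    rcases hk' with rfl | rfl | rfl | rfl | rfl | rfl
    · simpa [pow_zero] using hcomp 1 (by simp)
    · simpa [pow_one] using X_mem_insert_span _
    · exact hcomp _ (by simp)
    · exact hX3
    · exact hcomp _ (by simp)
    · have hrw : (X : Polynomial F) ^ 5 = (X ^ 5 + 1) - 1 := by ring
      rw [hrw]
      exact Submodule.sub_mem _ (hcomp _ (by simp)) (hcomp 1 (by simp))
  · rw [hsum]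
    refine le_trans (natDegree_add_le _ _) (max_le (le_trans natDegree_mul_le ?_) (by simp))
    have h1 : (C (-(4 * b ^ 2)) : Polynomial F).natDegree = 0 := natDegree_C _
    have h6 : ((X : Polynomial F) ^ 6 + X ^ 5 + 1).natDegree ≤ 6 :=
      le_trans (natDegree_add_le _ _) (max_le (le_trans (natDegree_add_le _ _)
        (max_le (by simp) (by simp))) (by simp))
    omega
  · rw [hsum, coeff_add, Polynomial.mul_coeff_zero, coeff_C_zero]
    have h1 : ((X : Polynomial F) ^ 6 + X ^ 5 + 1).coeff 0 = 1 := by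
      rw [coeff_add, coeff_add, coeff_X_pow, coeff_X_pow]
      simp
    have h2' : ((X : Polynomial F) ^ 6).coeff 0 = 0 := by
      rw [coeff_X_pow]; simp
    rw [h1, h2', mul_one, add_zero]
    exact neg_ne_zero.mpr (mul_ne_zero h4F (pow_ne_zero 2 hb))

lemma good6 (a b : F) (hab : 1 + a ^ 2 + b ^ 2 = 0) (hb : b ≠ 0) (h2 : (2 : F) ≠ 0) :
    GoodList F 6 := by
  set s1 : (Polynomial F × Polynomial F) × (Polynomial F × Polynomial F) :=
    ((X ^ 6, X ^ 3), (X ^ 5, -X ^ 4)) with hs1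
  set l : List (Polynomial F) := quadify a b [s1] ++ [1, X ^ 2] with hl
  have hlen : l.length = 6 := by simp [hl, quadify_length]
  have hcomp : ∀ c : Polynomial F, (c = X ^ 6 ∨ c = X ^ 3 ∨ c = X ^ 5 ∨ c = -X ^ 4) →
      c ∈ Submodule.span F (insert (X : Polynomial F) {r | r ∈ l}) := by
    intro c hc
    refine comp_mem_big a b hab hb h2 [s1] l ?_ ⟨s1, by simp, by simpa [hs1] using hc⟩
    intro r hr
    rw [hl, List.mem_append]
    exact Or.inl hr
  have hextra : ∀ c : Polynomial F, (c = 1 ∨ c = X ^ 2) →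
      c ∈ Submodule.span F (insert (X : Polynomial F) {r | r ∈ l}) := by
    intro c hc
    refine mem_insert_span ?_
    rw [hl, List.mem_append]
    refine Or.inr ?_
    rcases hc with rfl | rfl <;> simp
  have hsum : ((l.map (· ^ 2)).sum : Polynomial F) = X ^ 4 + 1 := by
    rw [hl, List.map_append, List.sum_append, quadify_sumsq a b hab]
    simp only [hs1, List.map_cons, List.map_nil, List.sum_cons, List.sum_nil, add_zero]
    ring
  refine ⟨l, hlen, ?_, ?_, ?_, ?_⟩
  · intro r hr
    rw [hl, List.mem_append] at hr
    rcases hr with hr | hr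
    · refine quadify_deg a b [s1] ?_ r hr
      intro s hs
      simp only [List.mem_singleton] at hs
      subst hs
      refine ⟨by simp [hs1], by simp [hs1], by simp [hs1], ?_⟩
      simp [hs1, natDegree_neg]
    · simp only [List.mem_cons, List.mem_singleton, List.not_mem_nil, or_false] at hr
      rcases hr with rfl | rfl <;> simp
  · intro k hk
    have hk' : k = 0 ∨ k = 1 ∨ k = 2 ∨ k = 3 ∨ k = 4 ∨ k = 5 ∨ k = 6 := by omega
    rcases hk' with rfl | rfl | rfl | rfl | rfl | rfl | rfl
    · simpa [pow_zero] using hextra 1 (by simp)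
    · simpa [pow_one] using X_mem_insert_span _
    · exact hextra _ (by simp)
    · exact hcomp _ (by simp)
    · have hrw : (X : Polynomial F) ^ 4 = -(-X ^ 4) := by ring
      rw [hrw]
      exact Submodule.neg_mem _ (hcomp _ (by simp))
    · exact hcomp _ (by simp)
    · exact hcomp _ (by simp)
  · rw [hsum]
    exact le_trans (natDegree_add_le _ _) (max_le (by simp) (by simp))
  · rw [hsum, coeff_add, coeff_X_pow]
    simp

lemma good_step (a b : F) (hab : 1 + a ^ 2 + b ^ 2 = 0) (hb : b ≠ 0) (h2 : (2 : F) ≠ 0)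
    (d : ℕ) (h : GoodList F d) : GoodList F (d + 4) := by
  obtain ⟨l, hlen, hdeg, hspan, hS, hS0⟩ := h
  set s1 : (Polynomial F × Polynomial F) × (Polynomial F × Polynomial F) :=
    ((X ^ (d + 4), X ^ (d + 1)), (X ^ (d + 3), -X ^ (d + 2))) with hs1
  set l' : List (Polynomial F) := quadify a b [s1] ++ l with hl'
  have hlen' : l'.length = d + 4 := by
    simp [hl', quadify_length, hlen]
    omega
  have hsub : Submodule.span F (insert (X : Polynomial F) {r | r ∈ l})
      ≤ Submodule.span F (insert (X : Polynomial F) {r | r ∈ l'}) := by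
    refine Submodule.span_mono ?_
    intro r hr
    rcases Set.mem_insert_iff.mp hr with rfl | hr
    · exact Set.mem_insert _ _
    · refine Set.mem_insert_of_mem _ ?_
      simp only [Set.mem_setOf_eq] at hr ⊢
      rw [hl', List.mem_append]
      exact Or.inr hr
  have hcomp : ∀ c : Polynomial F,
      (c = X ^ (d + 4) ∨ c = X ^ (d + 1) ∨ c = X ^ (d + 3) ∨ c = -X ^ (d + 2)) →
      c ∈ Submodule.span F (insert (X : Polynomial F) {r | r ∈ l'}) := by
    intro c hc
    refine comp_mem_big a b hab hb h2 [s1] l' ?_ ⟨s1, by simp, by simpa [hs1] using hc⟩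
    intro r hr
    rw [hl', List.mem_append]
    exact Or.inl hr
  have hsum' : ((l'.map (· ^ 2)).sum : Polynomial F) = (l.map (· ^ 2)).sum := by
    rw [hl', List.map_append, List.sum_append, quadify_sumsq a b hab]
    have hz : (([s1].map fun s => s.1.1 * s.1.2 + s.2.1 * s.2.2).sum : Polynomial F) = 0 := by
      simp only [hs1, List.map_cons, List.map_nil, List.sum_cons, List.sum_nil, add_zero]
      rw [mul_neg, ← pow_add, ← pow_add, show d + 4 + (d + 1) = d + 3 + (d + 2) by omega]
      exact add_neg_cancel _
    rw [hz, mul_zero, zero_add]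
  refine ⟨l', hlen', ?_, ?_, ?_, ?_⟩
  · intro r hr
    rw [hl', List.mem_append] at hr
    rcases hr with hr | hr
    · refine quadify_deg a b [s1] ?_ r hr
      intro s hs
      simp only [List.mem_singleton] at hs
      subst hs
      refine ⟨by simp [hs1], ?_, ?_, ?_⟩ <;> simp [hs1, natDegree_neg]
    · exact le_trans (hdeg r hr) (by omega)
  · intro k hk
    rcases Nat.lt_or_ge k (d + 1) with hlt | hge
    · exact hsub (hspan k (by omega))
    · have hk' : k = d + 1 ∨ k = d + 2 ∨ k = d + 3 ∨ k = d + 4 := by omega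
      rcases hk' with rfl | rfl | rfl | rfl
      · exact hcomp _ (by simp)
      · have hrw : (X : Polynomial F) ^ (d + 2) = -(-X ^ (d + 2)) := by ring
        rw [hrw]
        exact Submodule.neg_mem _ (hcomp _ (by simp))
      · exact hcomp _ (by simp)
      · exact hcomp _ (by simp)
  · rw [hsum']
    omega
  · rw [hsum']
    exact hS0

lemma good_all (a b : F) (hab : 1 + a ^ 2 + b ^ 2 = 0) (hb : b ≠ 0) (h2 : (2 : F) ≠ 0) :
    ∀ d, 3 ≤ d → GoodList F d := by
  intro d
  induction d using Nat.strong_induction_on with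
  | _ d ih =>
    intro hd3
    rcases Nat.lt_or_ge d 7 with h7 | h7
    · have hd' : d = 3 ∨ d = 4 ∨ d = 5 ∨ d = 6 := by omega
      rcases hd' with rfl | rfl | rfl | rfl
      · exact good3 a b hab hb
      · exact good4 a b hab hb h2
      · exact good5 a b hab hb h2
      · exact good6 a b hab hb h2
    · have hrec := ih (d - 4) (by omega) (by omega)
      have hstep := good_step a b hab hb h2 (d - 4) hrec
      rwa [Nat.sub_add_cancel (by omega)] at hstep

end OddMain

lemma two_ne_zero' (F : Type*) [Field F] (h : ringChar F ≠ 2) : (2 : F) ≠ 0 := by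
  intro h0
  have h2 : ((2 : ℕ) : F) = 0 := by exact_mod_cast h0
  have hdvd := ringChar.dvd h2
  rcases (Nat.dvd_prime Nat.prime_two).mp hdvd with h1 | h1
  · exact CharP.ringChar_ne_one h1
  · exact h h1

lemma exists_ab (F : Type*) [Field F] [Fintype F] :
    ∃ a b : F, 1 + a ^ 2 + b ^ 2 = 0 ∧ b ≠ 0 := by
  haveI : NeZero (ringChar F) := ⟨CharP.char_ne_zero_of_finite F (ringChar F)⟩
  obtain ⟨a, b, hab⟩ := CharP.sq_add_sq F (ringChar F) (-1)
  have hab' : 1 + (a : F) ^ 2 + (b : F) ^ 2 = 0 := by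
    push_cast at hab
    linear_combination hab
  by_cases hy : ((b : F)) = 0
  · refine ⟨(b : F), (a : F), by linear_combination hab', ?_⟩
    intro hx
    rw [hx, hy] at hab'
    simp at hab'
  · exact ⟨(a : F), (b : F), hab', hy⟩

end Stmt5


/-- Let `F` be a finite field and `2 ≤ d ≤ |F| + 1`; if `d = 2`, assume
further `|F| ≢ 3 (mod 4)`. Then there is `C₀ ⊆ F^d` with `|C₀| = |F| + 1 - d` that is
`Q`-generic for `Q = X₁² + ⋯ + X_d²` (so every affine hyperplane contains at most `d`
points of `C₀` and every hypersphere at most `d+1` points of `C₀`). -/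
theorem stmt_5 (F : Type*) [Field F] [Fintype F] (d : ℕ) (hd : 2 ≤ d)
    (hdF : d ≤ Fintype.card F + 1)
    (h4 : d = 2 → Fintype.card F % 4 ≠ 3) :
    ∃ C₀ : Set (Fin d → F), C₀.ncard = Fintype.card F + 1 - d ∧
      QGeneric (∑ i : Fin d, (MvPolynomial.X i : MvPolynomial (Fin d) F) ^ 2) C₀ := by
  rcases eq_or_ne (ringChar F) 2 with hchar | hchar
  · obtain ⟨l, h1, h2', h3, h4', h5⟩ := Stmt5.char2_list F hchar d hd
    exact Stmt5.reduction_list F d hd l h1 h2' h3 h4' h5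
  · have h2F : (2 : F) ≠ 0 := Stmt5.two_ne_zero' F hchar
    rcases Nat.lt_or_ge d 3 with hd2 | hd3
    · have hd2' : d = 2 := by omega
      subst hd2'
      have hsq : IsSquare (-1 : F) := FiniteField.isSquare_neg_one_iff.mpr (h4 rfl)
      obtain ⟨i, hi⟩ := hsq
      have hi' : 1 + i ^ 2 = 0 := by
        rw [pow_two, ← hi]
        ring
      obtain ⟨l, h1, h2', h3, h4'', h5⟩ := Stmt5.good2 i hi'
      exact Stmt5.reduction_list F 2 hd l h1 h2' h3 h4'' h5
    · obtain ⟨a, b, hab, hb⟩ := Stmt5.exists_ab F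
      obtain ⟨l, h1, h2', h3, h4'', h5⟩ := Stmt5.good_all a b hab hb h2F d hd3
      exact Stmt5.reduction_list F d hd l h1 h2' h3 h4'' h5
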